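/- Fix positive integers N, n, p, m_1, …, m_N, matrices A ∈ ℝ^{n×n}, B^j ∈ ℝ^{n×m_j}, C ∈ ℝ^{p×n}, D^j ∈ ℝ^{p×m_j}, symmetric Q^i ∈ ℝ^{p×p}, R^{ij} ∈ ℝ^{m_j×m_j}, and δ^i ∈ (0,1) for i, j ∈ {1,…,N}. Let K^{j*}, K̃^j ∈ ℝ^{m_j×n} satisfy ‖K̃^j − K^{j*}‖₂ ≤ ε for every j. Set F^* = A + Σ_j B^j K^{j*}, G^* = C + Σ_j D^j K^{j*}, F̃ = A + Σ_j B^j K̃^j, G̃ = C + Σ_j D^j K̃^j, λ := ‖F^*‖₂, b := Σ_j ‖B^j‖₂, d := Σ_j ‖D^j‖₂, and assume λ + bε < 1. Let M := sup_{t≥2} (t−1)(λ+bε)^{t−2} (finite), g(ε) := (‖G^*‖₂ + dε) M b ε + dε, G_{i1}(ε) := 2 g(ε) ‖Q^i‖₂ (‖G^*‖₂ + dε), G_{i2}(ε) := ε² Σ_j ‖R^{ij}‖₂ (‖K^{j*}‖₂ b M + 1) + 2ε Σ_j ‖R^{ij}‖₂ ‖K^{j*}‖₂ (‖K^{j*}‖₂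 b M + 1), and θ_i(ε) := G_{i1}(ε) + G_{i2}(ε). For x₁ ∈ ℝ^n define J^i(x₁) := ½ Σ_{t=1}^∞ (δ^i)^{t−1} x₁^⊤ ((F^*)^{t−1})^⊤ [ (G^*)^⊤ Q^i G^* + Σ_j (K^{j*})^⊤ R^{ij} K^{j*} ] (F^*)^{t−1} x₁ and J̃^i(x₁) := ½ Σ_{t=1}^∞ (δ^i)^{t−1} x₁^⊤ (F̃^{t−1})^⊤ [ G̃^⊤ Q^i G̃ + Σ_j (K̃^j)^⊤ R^{ij} K̃^j ] F̃^{t−1} x₁ (both series converge absolutely). Then for every i ∈ {1,…,N} and every x₁ ∈ ℝ^n: |J̃^i(x₁) − J^i(x₁)| ≤ ½ ‖x₁‖₂² · θ_i(ε) / (1 − δ^i). -/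

import Mathlib

open Matrix BigOperators
open scoped Matrix.Norms.L2Operator

/-- The spectral (operator 2-)norm of a real matrix. -/
noncomputable def sn {r c : ℕ} (A : Matrix (Fin r) (Fin c) ℝ) : ℝ :=
  ‖LinearMap.toContinuousLinearMap (Matrix.toEuclideanLin A)‖

lemma sn_eq {r c : ℕ} (A : Matrix (Fin r) (Fin c) ℝ) : sn A = ‖A‖ := rfl

lemma sn_nonneg {r c : ℕ} (A : Matrix (Fin r) (Fin c) ℝ) : 0 ≤ sn A := by
  rw [sn_eq]; exact norm_nonneg _

lemma sn_zero {r c : ℕ} : sn (0 : Matrix (Fin r) (Fin c) ℝ) = 0 := by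
  rw [sn_eq]; exact norm_zero

lemma sn_mul_le {r c l : ℕ} (A : Matrix (Fin r) (Fin c) ℝ) (B : Matrix (Fin c) (Fin l) ℝ) :
    sn (A * B) ≤ sn A * sn B := by
  simpa only [sn_eq] using Matrix.l2_opNorm_mul A B

lemma sn_transpose {r c : ℕ} (A : Matrix (Fin r) (Fin c) ℝ) : sn Aᵀ = sn A := by
  rw [sn_eq, sn_eq, ← Matrix.conjTranspose_eq_transpose_of_trivial]
  exact Matrix.l2_opNorm_conjTranspose A

lemma sn_add_le {r c : ℕ} (A B : Matrix (Fin r) (Fin c) ℝ) : sn (A + B) ≤ sn A + sn B := by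
  simp only [sn_eq]; exact norm_add_le _ _

lemma sn_sum_le {r c N' : ℕ} (f : Fin N' → Matrix (Fin r) (Fin c) ℝ) :
    sn (∑ j, f j) ≤ ∑ j, sn (f j) := by
  simp only [sn_eq]; exact norm_sum_le _ _

lemma sn_one_le {r : ℕ} : sn (1 : Matrix (Fin r) (Fin r) ℝ) ≤ 1 := by
  rw [sn_eq, Matrix.cstar_norm_def, _root_.map_one]
  exact ContinuousLinearMap.norm_id_le

lemma sn_dot {r : ℕ} (M : Matrix (Fin r) (Fin r) ℝ) (x : Fin r → ℝ) :
    |x ⬝ᵥ M.mulVec x| ≤ sn M * (x ⬝ᵥ x) := by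
  set x' : EuclideanSpace ℝ (Fin r) := (WithLp.equiv 2 _).symm x with hx'
  have h1 : x ⬝ᵥ M.mulVec x = inner ℝ x' (Matrix.toEuclideanLin M x') := by
    rw [Matrix.toEuclideanLin_apply]
    simp only [PiLp.inner_apply, RCLike.inner_apply, conj_trivial]
    rw [dotProduct_comm]; rfl
  have h2 : x ⬝ᵥ x = ‖x'‖ ^ 2 := by
    have := real_inner_self_eq_norm_sq x'
    rw [← this]
    simp only [PiLp.inner_apply, RCLike.inner_apply, conj_trivial]
    rfl
  rw [h1, h2]
  calc |inner ℝ x' (Matrix.toEuclideanLin M x')|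
      ≤ ‖x'‖ * ‖Matrix.toEuclideanLin M x'‖ := abs_real_inner_le_norm _ _
    _ ≤ ‖x'‖ * (sn M * ‖x'‖) := by
        apply mul_le_mul_of_nonneg_left _ (norm_nonneg _)
        exact (LinearMap.toContinuousLinearMap (Matrix.toEuclideanLin M)).le_opNorm x'
    _ = sn M * ‖x'‖ ^ 2 := by ring

lemma sn_pow_le {r : ℕ} (X : Matrix (Fin r) (Fin r) ℝ) {ρ : ℝ} (h0 : 0 ≤ ρ)
    (h : sn X ≤ ρ) : ∀ t : ℕ, sn (X ^ t) ≤ ρ ^ t := by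
  intro t
  induction t with
  | zero => simpa using sn_one_le
  | succ s ih =>
      rw [pow_succ, pow_succ]
      exact le_trans (sn_mul_le _ _)
        (mul_le_mul ih h (sn_nonneg _) (pow_nonneg h0 _))

lemma sn_pow_sub_le {r : ℕ} (X Y : Matrix (Fin r) (Fin r) ℝ) {ρ c : ℝ} (h0 : 0 ≤ ρ)
    (hX : sn X ≤ ρ) (hY : sn Y ≤ ρ) (hc : sn (X - Y) ≤ c) :
    ∀ s : ℕ, sn (X ^ (s + 1) - Y ^ (s + 1)) ≤ ((s : ℝ) + 1) * ρ ^ s * c := by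
  have hc0 : 0 ≤ c := le_trans (sn_nonneg _) hc
  intro s
  induction s with
  | zero => simpa using hc
  | succ s ih =>
      have hdecomp : X ^ (s + 2) - Y ^ (s + 2)
          = X * (X ^ (s + 1) - Y ^ (s + 1)) + (X - Y) * Y ^ (s + 1) := by
        simp only [Matrix.mul_sub, Matrix.sub_mul]
        rw [← pow_succ', ← pow_succ']
        abel
      have h1 : sn (X * (X ^ (s + 1) - Y ^ (s + 1))) ≤ ρ * (((s : ℝ) + 1) * ρ ^ s * c) :=
        le_trans (sn_mul_le _ _) (mul_le_mul hX ih (sn_nonneg _) h0)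
      have h2 : sn ((X - Y) * Y ^ (s + 1)) ≤ c * ρ ^ (s + 1) :=
        le_trans (sn_mul_le _ _)
          (mul_le_mul hc (sn_pow_le Y h0 hY (s + 1)) (sn_nonneg _) hc0)
      calc sn (X ^ (s + 2) - Y ^ (s + 2))
          ≤ sn (X * (X ^ (s + 1) - Y ^ (s + 1))) + sn ((X - Y) * Y ^ (s + 1)) := by
            rw [hdecomp]; exact sn_add_le _ _
        _ ≤ ρ * (((s : ℝ) + 1) * ρ ^ s * c) + c * ρ ^ (s + 1) := add_le_add h1 h2
        _ = ((s : ℝ) + 1 + 1) * ρ ^ (s + 1) * c := by ring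
        _ = ((↑(s + 1) : ℝ) + 1) * ρ ^ (s + 1) * c := by push_cast; ring

lemma sn_quad_diff {q r : ℕ} (U V : Matrix (Fin q) (Fin r) ℝ) (S : Matrix (Fin q) (Fin q) ℝ) :
    sn (Uᵀ * S * U - Vᵀ * S * V) ≤ sn (U - V) * sn S * (sn U + sn V) := by
  have hd : Uᵀ * S * U - Vᵀ * S * V = Uᵀ * S * (U - V) + (U - V)ᵀ * S * V := by
    simp only [Matrix.mul_sub, Matrix.sub_mul, Matrix.transpose_sub]
    abel
  have t1 : sn (Uᵀ * S * (U - V)) ≤ sn U * sn S * sn (U - V) :=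
    calc sn (Uᵀ * S * (U - V)) ≤ sn (Uᵀ * S) * sn (U - V) := sn_mul_le _ _
      _ ≤ sn Uᵀ * sn S * sn (U - V) :=
          mul_le_mul_of_nonneg_right (sn_mul_le _ _) (sn_nonneg _)
      _ = sn U * sn S * sn (U - V) := by rw [sn_transpose]
  have t2 : sn ((U - V)ᵀ * S * V) ≤ sn (U - V) * sn S * sn V :=
    calc sn ((U - V)ᵀ * S * V) ≤ sn ((U - V)ᵀ * S) * sn V := sn_mul_le _ _
      _ ≤ sn (U - V)ᵀ * sn S * sn V :=
          mul_le_mul_of_nonneg_right (sn_mul_le _ _) (sn_nonneg _)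
      _ = sn (U - V) * sn S * sn V := by rw [sn_transpose]
  calc sn (Uᵀ * S * U - Vᵀ * S * V)
      ≤ sn (Uᵀ * S * (U - V)) + sn ((U - V)ᵀ * S * V) := by rw [hd]; exact sn_add_le _ _
    _ ≤ sn U * sn S * sn (U - V) + sn (U - V) * sn S * sn V := add_le_add t1 t2
    _ = sn (U - V) * sn S * (sn U + sn V) := by ring

lemma sn_sandwich {r : ℕ} (X W : Matrix (Fin r) (Fin r) ℝ) (h : sn X ≤ 1) :
    sn (Xᵀ * W * X) ≤ sn W := by
  have h0 := sn_nonneg X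
  have hW := sn_nonneg W
  calc sn (Xᵀ * W * X) ≤ sn (Xᵀ * W) * sn X := sn_mul_le _ _
    _ ≤ sn Xᵀ * sn W * sn X :=
        mul_le_mul_of_nonneg_right (sn_mul_le _ _) h0
    _ = sn X * sn W * sn X := by rw [sn_transpose]
    _ ≤ 1 * sn W * 1 :=
        mul_le_mul (mul_le_mul_of_nonneg_right h hW) h h0 (by linarith)
    _ = sn W := by ring

/-- Theorem 1, part 2: explicit cost-gap bound.  With
`F* = A + Σⱼ BʲK^{j*}`, `G* = C + Σⱼ DʲK^{j*}`, `F̃ = A + Σⱼ BʲK̃ʲ`, `G̃ = C + Σⱼ DʲK̃ʲ`,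
`‖K̃ʲ − K^{j*}‖₂ ≤ ε`, `λ = ‖F*‖₂`, `b = Σⱼ‖Bʲ‖₂`, `d = Σⱼ‖Dʲ‖₂`, `λ + bε < 1`,
`M = sup_{t≥2}(t−1)(λ+bε)^{t−2}`, `g(ε) = (‖G*‖₂+dε)Mbε + dε`,
`G_{i1}(ε) = 2g(ε)‖Qⁱ‖₂(‖G*‖₂+dε)`,
`G_{i2}(ε) = ε²Σⱼ‖Rⁱʲ‖₂(‖K^{j*}‖₂bM+1) + 2εΣⱼ‖Rⁱʲ‖₂‖K^{j*}‖₂(‖K^{j*}‖₂bM+1)`,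
`θᵢ(ε) = G_{i1}(ε)+G_{i2}(ε)`, the infinite-horizon discounted quadratic costs satisfy
`|J̃ⁱ(x₁) − Jⁱ(x₁)| ≤ ½‖x₁‖₂² θᵢ(ε)/(1−δⁱ)`. -/
theorem stmt15 {N n p : ℕ} {m : Fin N → ℕ}
    (hN : 0 < N) (hn : 0 < n) (hp : 0 < p) (hm : ∀ j, 0 < m j)
    (A : Matrix (Fin n) (Fin n) ℝ)
    (B : (j : Fin N) → Matrix (Fin n) (Fin (m j)) ℝ)
    (C : Matrix (Fin p) (Fin n) ℝ)
    (D : (j : Fin N) → Matrix (Fin p) (Fin (m j)) ℝ)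
    (Q : Fin N → Matrix (Fin p) (Fin p) ℝ)
    (R : (i j : Fin N) → Matrix (Fin (m j)) (Fin (m j)) ℝ)
    (δ : Fin N → ℝ)
    (hQ : ∀ i, (Q i).IsSymm)
    (hR : ∀ i j, (R i j).IsSymm)
    (hδ : ∀ i, 0 < δ i ∧ δ i < 1)
    (Kstar Ktil : (j : Fin N) → Matrix (Fin (m j)) (Fin n) ℝ)
    (ε : ℝ) (hε : 0 ≤ ε) (hKε : ∀ j, sn (Ktil j - Kstar j) ≤ ε)
    -- named intermediate quantities, fixed by their defining equations
    (lam b d M gε : ℝ) (Gi1 Gi2 θ : Fin N → ℝ)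
    (hlam : lam = sn (A + ∑ j, B j * Kstar j))
    (hb : b = ∑ j, sn (B j))
    (hd : d = ∑ j, sn (D j))
    (hstab : lam + b * ε < 1)
    (hM : M = ⨆ s : ℕ, ((s : ℝ) + 1) * (lam + b * ε) ^ s)
    (hg : gε = (sn (C + ∑ j, D j * Kstar j) + d * ε) * M * b * ε + d * ε)
    (hGi1 : ∀ i, Gi1 i = 2 * gε * sn (Q i) * (sn (C + ∑ j, D j * Kstar j) + d * ε))
    (hGi2 : ∀ i, Gi2 i =
      ε ^ 2 * ∑ j, sn (R i j) * (sn (Kstar j) * b * M + 1)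
      + 2 * ε * ∑ j, sn (R i j) * sn (Kstar j) * (sn (Kstar j) * b * M + 1))
    (hθ : ∀ i, θ i = Gi1 i + Gi2 i) :
    ∀ (i : Fin N) (x₁ : Fin n → ℝ),
      |(1 / 2) * ∑' t : ℕ, (δ i) ^ t *
          (x₁ ⬝ᵥ (((A + ∑ j, B j * Ktil j) ^ t)ᵀ *
            ((C + ∑ j, D j * Ktil j)ᵀ * Q i * (C + ∑ j, D j * Ktil j)
              + ∑ j, (Ktil j)ᵀ * R i j * Ktil j) *
            (A + ∑ j, B j * Ktil j) ^ t).mulVec x₁)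
        - (1 / 2) * ∑' t : ℕ, (δ i) ^ t *
          (x₁ ⬝ᵥ (((A + ∑ j, B j * Kstar j) ^ t)ᵀ *
            ((C + ∑ j, D j * Kstar j)ᵀ * Q i * (C + ∑ j, D j * Kstar j)
              + ∑ j, (Kstar j)ᵀ * R i j * Kstar j) *
            (A + ∑ j, B j * Kstar j) ^ t).mulVec x₁)|
      ≤ (1 / 2) * (x₁ ⬝ᵥ x₁) * θ i * (1 / (1 - δ i)) := by
  intro i x₁
  obtain ⟨hδ0, hδ1⟩ := hδ i
  set F := A + ∑ j, B j * Kstar j with hFdef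
  set Ft := A + ∑ j, B j * Ktil j with hFtdef
  set G := C + ∑ j, D j * Kstar j with hGdef
  set Gt := C + ∑ j, D j * Ktil j with hGtdef
  set W := Gᵀ * Q i * G + ∑ j, (Kstar j)ᵀ * R i j * Kstar j with hWdef
  set Wt := Gtᵀ * Q i * Gt + ∑ j, (Ktil j)ᵀ * R i j * Ktil j with hWtdef
  have hb0 : 0 ≤ b := hb ▸ Finset.sum_nonneg fun j _ => sn_nonneg _
  have hd0 : 0 ≤ d := hd ▸ Finset.sum_nonneg fun j _ => sn_nonneg _
  have hlam0 : 0 ≤ lam := hlam ▸ sn_nonneg _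
  set ρ := lam + b * ε with hρdef
  have hρ0 : 0 ≤ ρ := add_nonneg hlam0 (mul_nonneg hb0 hε)
  have hρ1 : ρ < 1 := hstab
  -- difference of closed-loop matrices
  have hFt_sub : Ft - F = ∑ j, B j * (Ktil j - Kstar j) := by
    rw [hFtdef, hFdef]
    simp only [Matrix.mul_sub]
    rw [Finset.sum_sub_distrib]
    abel
  have hGt_sub : Gt - G = ∑ j, D j * (Ktil j - Kstar j) := by
    rw [hGtdef, hGdef]
    simp only [Matrix.mul_sub]
    rw [Finset.sum_sub_distrib]
    abel
  have hFtF : sn (Ft - F) ≤ b * ε := by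
    rw [hFt_sub, hb]
    calc sn (∑ j, B j * (Ktil j - Kstar j)) ≤ ∑ j, sn (B j * (Ktil j - Kstar j)) :=
        sn_sum_le _
      _ ≤ ∑ j, sn (B j) * ε := Finset.sum_le_sum fun j _ =>
          le_trans (sn_mul_le _ _) (mul_le_mul_of_nonneg_left (hKε j) (sn_nonneg _))
      _ = (∑ j, sn (B j)) * ε := (Finset.sum_mul _ _ _).symm
  have hGtG : sn (Gt - G) ≤ d * ε := by
    rw [hGt_sub, hd]
    calc sn (∑ j, D j * (Ktil j - Kstar j)) ≤ ∑ j, sn (D j * (Ktil j - Kstar j)) :=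
        sn_sum_le _
      _ ≤ ∑ j, sn (D j) * ε := Finset.sum_le_sum fun j _ =>
          le_trans (sn_mul_le _ _) (mul_le_mul_of_nonneg_left (hKε j) (sn_nonneg _))
      _ = (∑ j, sn (D j)) * ε := (Finset.sum_mul _ _ _).symm
  have hF : sn F ≤ ρ := by
    rw [← hlam, hρdef]; nlinarith [mul_nonneg hb0 hε]
  have hFt_le : sn Ft ≤ ρ := by
    calc sn Ft = sn (F + (Ft - F)) := by rw [add_sub_cancel]
      _ ≤ sn F + sn (Ft - F) := sn_add_le _ _
      _ ≤ lam + b * ε := add_le_add (le_of_eq hlam.symm) hFtF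
  have hGt_le : sn Gt ≤ sn G + d * ε := by
    calc sn Gt = sn (G + (Gt - G)) := by rw [add_sub_cancel]
      _ ≤ sn G + sn (Gt - G) := sn_add_le _ _
      _ ≤ sn G + d * ε := add_le_add le_rfl hGtG
  have hKt_le : ∀ j, sn (Ktil j) ≤ sn (Kstar j) + ε := fun j => by
    calc sn (Ktil j) = sn (Kstar j + (Ktil j - Kstar j)) := by rw [add_sub_cancel]
      _ ≤ sn (Kstar j) + sn (Ktil j - Kstar j) := sn_add_le _ _
      _ ≤ sn (Kstar j) + ε := add_le_add le_rfl (hKε j)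
  -- facts about M
  have hbdd : ∀ s : ℕ, ((s : ℝ) + 1) * ρ ^ s ≤ (1 - ρ)⁻¹ := by
    intro s
    have h1 : ((s : ℝ) + 1) * ρ ^ s = ∑ k ∈ Finset.range (s + 1), ρ ^ s := by
      rw [Finset.sum_const, Finset.card_range]; push_cast; ring
    rw [h1]
    calc ∑ k ∈ Finset.range (s + 1), ρ ^ s ≤ ∑ k ∈ Finset.range (s + 1), ρ ^ k :=
        Finset.sum_le_sum fun k hk => pow_le_pow_of_le_one hρ0 hρ1.le
          (Nat.lt_succ_iff.mp (Finset.mem_range.mp hk))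
      _ ≤ ∑' k : ℕ, ρ ^ k := Summable.sum_le_tsum _ (fun k _ => pow_nonneg hρ0 k)
          (summable_geometric_of_lt_one hρ0 hρ1)
      _ = (1 - ρ)⁻¹ := tsum_geometric_of_lt_one hρ0 hρ1
  have hMge : ∀ s : ℕ, ((s : ℝ) + 1) * ρ ^ s ≤ M := by
    intro s
    rw [hM]
    exact le_ciSup ⟨(1 - ρ)⁻¹, by rintro y ⟨s, rfl⟩; exact hbdd s⟩ s
  have hM1 : (1 : ℝ) ≤ M := by simpa using hMge 0
  have hM0 : (0 : ℝ) ≤ M := by linarith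
  -- powers
  have hFpow : ∀ t, sn (F ^ t) ≤ 1 := fun t =>
    le_trans (sn_pow_le F hρ0 hF t) (pow_le_one₀ hρ0 hρ1.le)
  have hFtpow : ∀ t, sn (Ft ^ t) ≤ 1 := fun t =>
    le_trans (sn_pow_le Ft hρ0 hFt_le t) (pow_le_one₀ hρ0 hρ1.le)
  have hpow_sub : ∀ t, sn (Ft ^ t - F ^ t) ≤ M * (b * ε) := by
    intro t
    match t with
    | 0 =>
      simp only [pow_zero, sub_self, sn_zero]
      exact mul_nonneg hM0 (mul_nonneg hb0 hε)
    | s + 1 =>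
      calc sn (Ft ^ (s + 1) - F ^ (s + 1)) ≤ ((s : ℝ) + 1) * ρ ^ s * (b * ε) :=
          sn_pow_sub_le Ft F hρ0 hFt_le hF hFtF s
        _ ≤ M * (b * ε) :=
          mul_le_mul_of_nonneg_right (hMge s) (mul_nonneg hb0 hε)
  -- products with G and K
  have hgε0 : 0 ≤ gε := by
    rw [hg]
    have h1 : 0 ≤ sn G + d * ε := add_nonneg (sn_nonneg _) (mul_nonneg hd0 hε)
    have h2 : 0 ≤ d * ε := mul_nonneg hd0 hε
    have h3 := mul_nonneg (mul_nonneg (mul_nonneg h1 hM0) hb0) hε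
    linarith
  have hGprod : ∀ t, sn (Gt * Ft ^ t - G * F ^ t) ≤ gε := by
    intro t
    have hdec : Gt * Ft ^ t - G * F ^ t = Gt * (Ft ^ t - F ^ t) + (Gt - G) * F ^ t := by
      simp only [Matrix.mul_sub, Matrix.sub_mul]; abel
    have hGnn : 0 ≤ sn G + d * ε := add_nonneg (sn_nonneg _) (mul_nonneg hd0 hε)
    calc sn (Gt * Ft ^ t - G * F ^ t)
        ≤ sn (Gt * (Ft ^ t - F ^ t)) + sn ((Gt - G) * F ^ t) := by
          rw [hdec]; exact sn_add_le _ _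
      _ ≤ (sn G + d * ε) * (M * (b * ε)) + d * ε * 1 := add_le_add
          (le_trans (sn_mul_le _ _) (mul_le_mul hGt_le (hpow_sub t) (sn_nonneg _) hGnn))
          (le_trans (sn_mul_le _ _)
            (mul_le_mul hGtG (hFpow t) (sn_nonneg _) (mul_nonneg hd0 hε)))
      _ = gε := by rw [hg]; ring
  have hKprod : ∀ j t, sn (Ktil j * Ft ^ t - Kstar j * F ^ t)
      ≤ ε * (sn (Kstar j) * b * M + 1) := by
    intro j t
    have hdec : Ktil j * Ft ^ t - Kstar j * F ^ t
        = (Ktil j - Kstar j) * Ft ^ t + Kstar j * (Ft ^ t - F ^ t) := by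
      simp only [Matrix.mul_sub, Matrix.sub_mul]; abel
    calc sn (Ktil j * Ft ^ t - Kstar j * F ^ t)
        ≤ sn ((Ktil j - Kstar j) * Ft ^ t) + sn (Kstar j * (Ft ^ t - F ^ t)) := by
          rw [hdec]; exact sn_add_le _ _
      _ ≤ ε * 1 + sn (Kstar j) * (M * (b * ε)) := add_le_add
          (le_trans (sn_mul_le _ _) (mul_le_mul (hKε j) (hFtpow t) (sn_nonneg _) hε))
          (le_trans (sn_mul_le _ _)
            (mul_le_mul_of_nonneg_left (hpow_sub t) (sn_nonneg _)))
      _ = ε * (sn (Kstar j) * b * M + 1) := by ring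
  -- expansion of the sandwiched cost matrix
  have hexpand : ∀ (F' : Matrix (Fin n) (Fin n) ℝ) (G' : Matrix (Fin p) (Fin n) ℝ)
      (K' : (j : Fin N) → Matrix (Fin (m j)) (Fin n) ℝ) (t : ℕ),
      (F' ^ t)ᵀ * (G'ᵀ * Q i * G' + ∑ j, (K' j)ᵀ * R i j * K' j) * F' ^ t
        = (G' * F' ^ t)ᵀ * Q i * (G' * F' ^ t)
          + ∑ j, (K' j * F' ^ t)ᵀ * R i j * (K' j * F' ^ t) := by
    intro F' G' K' t
    simp only [Matrix.transpose_mul, Matrix.add_mul, Matrix.mul_add, Matrix.sum_mul,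
      Matrix.mul_sum, Matrix.mul_assoc]
  -- the key per-step bound
  have hkey : ∀ t : ℕ, sn ((Ft ^ t)ᵀ * Wt * Ft ^ t - (F ^ t)ᵀ * W * F ^ t) ≤ θ i := by
    intro t
    rw [hWtdef, hWdef, hexpand Ft Gt Ktil t, hexpand F G Kstar t]
    have hsplit :
        ((Gt * Ft ^ t)ᵀ * Q i * (Gt * Ft ^ t)
            + ∑ j, (Ktil j * Ft ^ t)ᵀ * R i j * (Ktil j * Ft ^ t))
          - ((G * F ^ t)ᵀ * Q i * (G * F ^ t)
            + ∑ j, (Kstar j * F ^ t)ᵀ * R i j * (Kstar j * F ^ t))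
        = ((Gt * Ft ^ t)ᵀ * Q i * (Gt * Ft ^ t) - (G * F ^ t)ᵀ * Q i * (G * F ^ t))
          + ∑ j, ((Ktil j * Ft ^ t)ᵀ * R i j * (Ktil j * Ft ^ t)
            - (Kstar j * F ^ t)ᵀ * R i j * (Kstar j * F ^ t)) := by
      rw [Finset.sum_sub_distrib]; abel
    -- Q part
    have hGnn : 0 ≤ sn G + d * ε := add_nonneg (sn_nonneg _) (mul_nonneg hd0 hε)
    have hU : sn (Gt * Ft ^ t) ≤ sn G + d * ε :=
      le_trans (sn_mul_le _ _) (by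
        have := mul_le_mul hGt_le (hFtpow t) (sn_nonneg _) hGnn
        simpa using this)
    have hV : sn (G * F ^ t) ≤ sn G :=
      le_trans (sn_mul_le _ _) (by
        have := mul_le_mul_of_nonneg_left (hFpow t) (sn_nonneg G)
        simpa using this)
    have hQpart : sn ((Gt * Ft ^ t)ᵀ * Q i * (Gt * Ft ^ t)
        - (G * F ^ t)ᵀ * Q i * (G * F ^ t)) ≤ Gi1 i := by
      calc sn ((Gt * Ft ^ t)ᵀ * Q i * (Gt * Ft ^ t) - (G * F ^ t)ᵀ * Q i * (G * F ^ t))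
          ≤ sn (Gt * Ft ^ t - G * F ^ t) * sn (Q i) * (sn (Gt * Ft ^ t) + sn (G * F ^ t)) :=
            sn_quad_diff _ _ _
        _ ≤ gε * sn (Q i) * ((sn G + d * ε) + (sn G + d * ε)) := by
            apply mul_le_mul
            · exact mul_le_mul_of_nonneg_right (hGprod t) (sn_nonneg _)
            · exact add_le_add hU (le_trans hV (by linarith [mul_nonneg hd0 hε]))
            · exact add_nonneg (sn_nonneg _) (sn_nonneg _)
            · exact mul_nonneg hgε0 (sn_nonneg _)
        _ = Gi1 i := by rw [hGi1 i]; ring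
    -- R part, per player
    have hRper : ∀ j, sn ((Ktil j * Ft ^ t)ᵀ * R i j * (Ktil j * Ft ^ t)
        - (Kstar j * F ^ t)ᵀ * R i j * (Kstar j * F ^ t))
        ≤ ε ^ 2 * (sn (R i j) * (sn (Kstar j) * b * M + 1))
          + 2 * ε * (sn (R i j) * sn (Kstar j) * (sn (Kstar j) * b * M + 1)) := by
      intro j
      have hcj : 0 ≤ sn (Kstar j) * b * M + 1 := by
        have := mul_nonneg (mul_nonneg (sn_nonneg (Kstar j)) hb0) hM0; linarith
      have hUj : sn (Ktil j * Ft ^ t) ≤ sn (Kstar j) + ε :=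
        le_trans (sn_mul_le _ _) (by
          have := mul_le_mul (hKt_le j) (hFtpow t) (sn_nonneg _)
            (add_nonneg (sn_nonneg _) hε)
          simpa using this)
      have hVj : sn (Kstar j * F ^ t) ≤ sn (Kstar j) :=
        le_trans (sn_mul_le _ _) (by
          have := mul_le_mul_of_nonneg_left (hFpow t) (sn_nonneg (Kstar j))
          simpa using this)
      calc sn ((Ktil j * Ft ^ t)ᵀ * R i j * (Ktil j * Ft ^ t)
            - (Kstar j * F ^ t)ᵀ * R i j * (Kstar j * F ^ t))
          ≤ sn (Ktil j * Ft ^ t - Kstar j * F ^ t) * sn (R i j)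
              * (sn (Ktil j * Ft ^ t) + sn (Kstar j * F ^ t)) := sn_quad_diff _ _ _
        _ ≤ (ε * (sn (Kstar j) * b * M + 1)) * sn (R i j)
              * ((sn (Kstar j) + ε) + sn (Kstar j)) := by
            apply mul_le_mul
            · exact mul_le_mul_of_nonneg_right (hKprod j t) (sn_nonneg _)
            · exact add_le_add hUj hVj
            · exact add_nonneg (sn_nonneg _) (sn_nonneg _)
            · exact mul_nonneg (mul_nonneg hε hcj) (sn_nonneg _)
        _ = ε ^ 2 * (sn (R i j) * (sn (Kstar j) * b * M + 1))
              + 2 * ε * (sn (R i j) * sn (Kstar j) * (sn (Kstar j) * b * M + 1)) := by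
            ring
    calc sn (((Gt * Ft ^ t)ᵀ * Q i * (Gt * Ft ^ t)
            + ∑ j, (Ktil j * Ft ^ t)ᵀ * R i j * (Ktil j * Ft ^ t))
          - ((G * F ^ t)ᵀ * Q i * (G * F ^ t)
            + ∑ j, (Kstar j * F ^ t)ᵀ * R i j * (Kstar j * F ^ t)))
        ≤ sn ((Gt * Ft ^ t)ᵀ * Q i * (Gt * Ft ^ t) - (G * F ^ t)ᵀ * Q i * (G * F ^ t))
          + sn (∑ j, ((Ktil j * Ft ^ t)ᵀ * R i j * (Ktil j * Ft ^ t)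
            - (Kstar j * F ^ t)ᵀ * R i j * (Kstar j * F ^ t))) := by
          rw [hsplit]; exact sn_add_le _ _
      _ ≤ Gi1 i + ∑ j, (ε ^ 2 * (sn (R i j) * (sn (Kstar j) * b * M + 1))
            + 2 * ε * (sn (R i j) * sn (Kstar j) * (sn (Kstar j) * b * M + 1))) :=
          add_le_add hQpart (le_trans (sn_sum_le _) (Finset.sum_le_sum fun j _ => hRper j))
      _ = Gi1 i + Gi2 i := by
          rw [hGi2 i, Finset.sum_add_distrib, ← Finset.mul_sum, ← Finset.mul_sum]
      _ = θ i := (hθ i).symm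
  -- nonnegativity facts
  have hxx : 0 ≤ x₁ ⬝ᵥ x₁ := Finset.sum_nonneg fun k _ => mul_self_nonneg _
  -- summability of the two series
  have hbound : ∀ (X : Matrix (Fin n) (Fin n) ℝ) (V : Matrix (Fin n) (Fin n) ℝ),
      (∀ t, sn (X ^ t) ≤ 1) → ∀ t : ℕ,
      ‖δ i ^ t * (x₁ ⬝ᵥ ((X ^ t)ᵀ * V * X ^ t).mulVec x₁)‖
        ≤ sn V * (x₁ ⬝ᵥ x₁) * δ i ^ t := by
    intro X V hX t
    rw [Real.norm_eq_abs, abs_mul, abs_pow, abs_of_nonneg hδ0.le]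
    have h1 : |x₁ ⬝ᵥ ((X ^ t)ᵀ * V * X ^ t).mulVec x₁| ≤ sn V * (x₁ ⬝ᵥ x₁) :=
      le_trans (sn_dot _ _) (mul_le_mul_of_nonneg_right (sn_sandwich _ _ (hX t)) hxx)
    calc δ i ^ t * |x₁ ⬝ᵥ ((X ^ t)ᵀ * V * X ^ t).mulVec x₁|
        ≤ δ i ^ t * (sn V * (x₁ ⬝ᵥ x₁)) :=
          mul_le_mul_of_nonneg_left h1 (pow_nonneg hδ0.le t)
      _ = sn V * (x₁ ⬝ᵥ x₁) * δ i ^ t := by ring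
  have hsum1 : Summable (fun t : ℕ => δ i ^ t * (x₁ ⬝ᵥ ((Ft ^ t)ᵀ * Wt * Ft ^ t).mulVec x₁)) :=
    Summable.of_norm_bounded
      ((summable_geometric_of_lt_one hδ0.le hδ1).mul_left (sn Wt * (x₁ ⬝ᵥ x₁)))
      (hbound Ft Wt hFtpow)
  have hsum2 : Summable (fun t : ℕ => δ i ^ t * (x₁ ⬝ᵥ ((F ^ t)ᵀ * W * F ^ t).mulVec x₁)) :=
    Summable.of_norm_bounded
      ((summable_geometric_of_lt_one hδ0.le hδ1).mul_left (sn W * (x₁ ⬝ᵥ x₁)))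
      (hbound F W hFpow)
  -- final assembly
  have hgeom : HasSum (fun t : ℕ => δ i ^ t * (θ i * (x₁ ⬝ᵥ x₁)))
      ((1 - δ i)⁻¹ * (θ i * (x₁ ⬝ᵥ x₁))) :=
    (hasSum_geometric_of_lt_one hδ0.le hδ1).mul_right _
  have hterm : ∀ t : ℕ,
      ‖δ i ^ t * (x₁ ⬝ᵥ ((Ft ^ t)ᵀ * Wt * Ft ^ t).mulVec x₁)
        - δ i ^ t * (x₁ ⬝ᵥ ((F ^ t)ᵀ * W * F ^ t).mulVec x₁)‖
      ≤ δ i ^ t * (θ i * (x₁ ⬝ᵥ x₁)) := by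
    intro t
    rw [Real.norm_eq_abs, ← mul_sub, abs_mul, abs_pow, abs_of_nonneg hδ0.le]
    apply mul_le_mul_of_nonneg_left _ (pow_nonneg hδ0.le t)
    have hdp : x₁ ⬝ᵥ ((Ft ^ t)ᵀ * Wt * Ft ^ t).mulVec x₁
        - x₁ ⬝ᵥ ((F ^ t)ᵀ * W * F ^ t).mulVec x₁
        = x₁ ⬝ᵥ ((Ft ^ t)ᵀ * Wt * Ft ^ t - (F ^ t)ᵀ * W * F ^ t).mulVec x₁ := by
      rw [Matrix.sub_mulVec, dotProduct_sub]
    rw [hdp]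
    exact le_trans (sn_dot _ _) (mul_le_mul_of_nonneg_right (hkey t) hxx)
  calc |(1 / 2) * ∑' t : ℕ, δ i ^ t * (x₁ ⬝ᵥ ((Ft ^ t)ᵀ * Wt * Ft ^ t).mulVec x₁)
        - (1 / 2) * ∑' t : ℕ, δ i ^ t * (x₁ ⬝ᵥ ((F ^ t)ᵀ * W * F ^ t).mulVec x₁)|
      = (1 / 2) * |∑' t : ℕ, (δ i ^ t * (x₁ ⬝ᵥ ((Ft ^ t)ᵀ * Wt * Ft ^ t).mulVec x₁)
          - δ i ^ t * (x₁ ⬝ᵥ ((F ^ t)ᵀ * W * F ^ t).mulVec x₁))| := by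
        rw [← mul_sub, abs_mul, ← Summable.tsum_sub hsum1 hsum2]
        norm_num
    _ ≤ (1 / 2) * ((1 - δ i)⁻¹ * (θ i * (x₁ ⬝ᵥ x₁))) := by
        apply mul_le_mul_of_nonneg_left _ (by norm_num)
        rw [← Real.norm_eq_abs]
        exact tsum_of_norm_bounded hgeom hterm
    _ = (1 / 2) * (x₁ ⬝ᵥ x₁) * θ i * (1 / (1 - δ i)) := by
        rw [one_div]; ring
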